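/- Let (N,v) be a TU game with veto player a. If the equal-split-among-users allocation (v(N)/(|N|−1) to each player other than a and 0 to a) belongs to the core, then the fully egalitarian allocation (v(N)/|N| to every player) also belongs to the core. -/

import Mathlib

open Finset

/-- Membership in the core: efficiency plus the coalition constraints for all
nonempty proper coalitions. -/
def inCore {ι : Type*} [Fintype ι] [DecidableEq ι] (v : Finset ι → ℝ) (x : ι → ℝ) : Prop :=
  (∑ i, x i) = v Finset.univ ∧
    ∀ S : Finset ι, S.Nonempty → S ≠ Finset.univ → v S ≤ ∑ i ∈ S, x i

/-- For a veto game, if the equal-split-among-users allocation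
(`v(N)/(|N|−1)` to each player other than `a`, `0` to `a`) is in the core,
then the fully egalitarian allocation (`v(N)/|N|` to every player) is in the core. -/
theorem stmt10 {ι : Type*} [Fintype ι] [DecidableEq ι] (v : Finset ι → ℝ) (a : ι)
    (hcard : 2 ≤ Fintype.card ι)
    (hempty : v ∅ = 0)
    (hveto : ∀ S : Finset ι, a ∉ S → v S = 0)
    (hua : inCore v (fun i => if i = a then 0 else v Finset.univ / ((Fintype.card ι : ℝ) - 1))) :
    inCore v (fun _ => v Finset.univ / (Fintype.card ι : ℝ)) := by
  obtain ⟨heff, hcoal⟩ := hua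
  set n : ℕ := Fintype.card ι with hn
  have hn0 : (0:ℝ) < (n:ℝ) := by positivity
  have hn2 : (2:ℝ) ≤ (n:ℝ) := by exact_mod_cast hcard
  set M : ℝ := v Finset.univ with hM
  -- sum over a coalition containing a
  have hsum : ∀ S : Finset ι, a ∈ S →
      (∑ i ∈ S, (if i = a then (0:ℝ) else M / ((n:ℝ) - 1)))
        = ((S.card : ℝ) - 1) * (M / ((n:ℝ) - 1)) := by
    intro S haS
    rw [← Finset.insert_erase haS, Finset.sum_insert (Finset.notMem_erase a S)]
    simp only [if_pos rfl, zero_add]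
    rw [Finset.sum_congr rfl (fun i hi => if_neg (Finset.ne_of_mem_erase hi)),
      Finset.sum_const, Finset.card_erase_of_mem haS, nsmul_eq_mul,
      Finset.card_insert_of_notMem (Finset.notMem_erase a S),
      Finset.card_erase_of_mem haS]
    have h1 : 1 ≤ S.card := Finset.card_pos.mpr ⟨a, haS⟩
    have : ((S.card - 1 : ℕ) : ℝ) = (S.card : ℝ) - 1 := by
      push_cast [h1]; ring
    rw [this]
    push_cast [Nat.sub_add_cancel h1]
    ring
  -- M ≥ 0
  have hMpos : 0 ≤ M := by
    have hne : (Finset.univ.erase a).Nonempty := by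
      rw [← Finset.card_pos, Finset.card_erase_of_mem (Finset.mem_univ a), Finset.card_univ]
      omega
    have hproper : Finset.univ.erase a ≠ Finset.univ := by
      intro h
      have := Finset.notMem_erase a (Finset.univ : Finset ι)
      rw [h] at this
      exact this (Finset.mem_univ a)
    have h := hcoal _ hne hproper
    rw [hveto _ (Finset.notMem_erase a _)] at h
    have hsum2 : (∑ i ∈ Finset.univ.erase a,
        (if i = a then (0:ℝ) else M / ((n:ℝ) - 1))) = M := by
      rw [Finset.sum_congr rfl (fun i hi => if_neg (Finset.ne_of_mem_erase hi)),
        Finset.sum_const, Finset.card_erase_of_mem (Finset.mem_univ a),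
        Finset.card_univ, nsmul_eq_mul]
      have h1 : (1:ℕ) ≤ n := by omega
      have : ((n - 1 : ℕ) : ℝ) = (n:ℝ) - 1 := by push_cast [h1]; ring
      rw [this]
      rw [mul_comm]; exact div_mul_cancel₀ M (by linarith : (n:ℝ) - 1 ≠ 0)
    rw [hsum2] at h
    exact h
  constructor
  · rw [Finset.sum_const, Finset.card_univ, nsmul_eq_mul]
    field_simp
    rfl
  · intro S hS hSne
    rw [Finset.sum_const, nsmul_eq_mul]
    by_cases haS : a ∈ S
    · have h := hcoal S hS hSne
      rw [hsum S haS] at h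
      refine h.trans ?_
      have hcardS : S.card < n := by
        have := Finset.card_lt_card (Finset.lt_iff_ssubset.mp
          (lt_of_le_of_ne (Finset.le_iff_subset.mpr (Finset.subset_univ S)) hSne))
        rwa [Finset.card_univ] at this
      have h1 : (1:ℝ) ≤ (S.card : ℝ) := by
        exact_mod_cast Finset.card_pos.mpr ⟨a, haS⟩
      have h2 : (S.card : ℝ) ≤ (n:ℝ) - 1 := by
        have : S.card + 1 ≤ n := hcardS
        have := (Nat.cast_le (α := ℝ)).mpr this
        push_cast at this
        linarith
      rw [← mul_div_assoc, ← mul_div_assoc, div_le_div_iff₀ (by linarith) hn0]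
      nlinarith [mul_nonneg hMpos (sub_nonneg.mpr h1)]
    · rw [hveto S haS]
      have : (0:ℝ) ≤ (S.card : ℝ) := by positivity
      positivity
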